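/- Error recursion with inexact gradient: Under the setting of the previous structural lemma, if instead x⁺ = argmin over X of ⟨g, z − x⟩ + ½(z − x)ᵀ H (z − x) for some vector g, then ‖x⁺ − x*‖ ≤ ‖∇F(x) − g‖/μ + (‖H − ∇²F(x)‖/μ)·‖x − x*‖ + (L/(2μ))·‖x − x*‖². -/

import Mathlib

open scoped RealInnerProductSpace

lemma taylor_remainder_half {E : Type*} [NormedAddCommGroup E] [NormedSpace ℝ E] [CompleteSpace E]
    (f : E → E) (f' : E → (E →L[ℝ] E)) (x y : E)
    (hd : ∀ u ∈ segment ℝ x y, HasFDerivAt f (f' u) u)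
    (hcont : ContinuousOn f' (segment ℝ x y))
    (L : ℝ) (hL : 0 ≤ L)
    (hlip : ∀ u ∈ segment ℝ x y, ‖f' u - f' x‖ ≤ L * ‖u - x‖) :
    ‖f y - f x - f' x (y - x)‖ ≤ L / 2 * ‖y - x‖ ^ 2 := by
  set v := y - x with hv
  set γ : ℝ → E := fun t => x + t • v with hγ
  have hγmem : ∀ t ∈ Set.Icc (0:ℝ) 1, γ t ∈ segment ℝ x y := by
    intro t ht
    refine ⟨1 - t, t, by linarith [ht.2], ht.1, by ring, ?_⟩
    simp [hγ, hv]
    module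
  have hγcont : Continuous γ := by continuity
  have hderiv : ∀ t ∈ Set.Icc (0:ℝ) 1, HasDerivAt (fun t => f (γ t)) ((f' (γ t)) v) t := by
    intro t ht
    have hline : HasDerivAt γ v t := by
      have h := ((hasDerivAt_id t).smul_const v).const_add x
      rw [one_smul] at h
      exact h
    exact (hd (γ t) (hγmem t ht)).comp_hasDerivAt t hline
  have hcont' : ContinuousOn (fun t => (f' (γ t)) v) (Set.Icc (0:ℝ) 1) := by
    have : ContinuousOn (fun t => f' (γ t)) (Set.Icc (0:ℝ) 1) :=
      hcont.comp hγcont.continuousOn hγmem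
    exact (ContinuousLinearMap.apply ℝ E v).continuous.comp_continuousOn this
  have hint : IntervalIntegrable (fun t => (f' (γ t)) v) MeasureTheory.volume 0 1 := by
    apply ContinuousOn.intervalIntegrable
    simpa [Set.uIcc_of_le (zero_le_one : (0:ℝ) ≤ 1)] using hcont'
  have hftc : ∫ t in (0:ℝ)..1, (f' (γ t)) v = (fun t => f (γ t)) 1 - (fun t => f (γ t)) 0 := by
    refine intervalIntegral.integral_eq_sub_of_hasDerivAt (f := fun t => f (γ t)) (fun t ht => ?_) hint
    rw [Set.uIcc_of_le (zero_le_one : (0:ℝ) ≤ 1)] at ht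
    exact hderiv t ht
  have hγ0 : γ 0 = x := by simp [hγ]
  have hγ1 : γ 1 = y := by simp only [hγ, hv, one_smul]; abel
  have hconst : ∫ t in (0:ℝ)..1, (f' x) v = (f' x) v := by simp
  have key : f y - f x - f' x v = ∫ t in (0:ℝ)..1, ((f' (γ t)) v - (f' x) v) := by
    rw [intervalIntegral.integral_sub hint (by simp), hftc, hconst]
    simp only [hγ0, hγ1]
  rw [key]
  have hbound : ∀ t ∈ Set.Icc (0:ℝ) 1, ‖(f' (γ t)) v - (f' x) v‖ ≤ L * t * ‖v‖ ^ 2 := by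
    intro t ht
    have h1 : ‖(f' (γ t) - f' x) v‖ ≤ ‖f' (γ t) - f' x‖ * ‖v‖ :=
      (f' (γ t) - f' x).le_opNorm v
    have h2 : ‖f' (γ t) - f' x‖ ≤ L * ‖γ t - x‖ := hlip (γ t) (hγmem t ht)
    have h3 : ‖γ t - x‖ = t * ‖v‖ := by
      simp [hγ, norm_smul, abs_of_nonneg ht.1]
    calc ‖(f' (γ t)) v - (f' x) v‖ = ‖(f' (γ t) - f' x) v‖ := by simp
      _ ≤ ‖f' (γ t) - f' x‖ * ‖v‖ := h1
      _ ≤ L * ‖γ t - x‖ * ‖v‖ := by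
          exact mul_le_mul_of_nonneg_right h2 (norm_nonneg v)
      _ = L * t * ‖v‖ ^ 2 := by rw [h3]; ring
  calc ‖∫ t in (0:ℝ)..1, ((f' (γ t)) v - (f' x) v)‖
      ≤ ∫ t in (0:ℝ)..1, ‖(f' (γ t)) v - (f' x) v‖ :=
        intervalIntegral.norm_integral_le_integral_norm zero_le_one
    _ ≤ ∫ t in (0:ℝ)..1, L * t * ‖v‖ ^ 2 := by
        apply intervalIntegral.integral_mono_on zero_le_one
        · exact (hint.sub (by simp)).norm
        · apply Continuous.intervalIntegrable; continuity
        · exact hbound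
    _ = L / 2 * ‖v‖ ^ 2 := by
        have : (fun t : ℝ => L * t * ‖v‖ ^ 2) = fun t : ℝ => (L * ‖v‖ ^ 2) * t := by
          funext t; ring
        rw [this, intervalIntegral.integral_const_mul, integral_id]
        ring

/-- Error recursion with inexact gradient: the structural lemma where the update uses an
approximate gradient `g` in place of `∇F(x)`. -/
theorem structural_error_recursion_inexact_gradient {p : ℕ}
    (D X : Set (EuclideanSpace ℝ (Fin p)))
    (hD : IsOpen D) (hDconv : Convex ℝ D) (hXconv : Convex ℝ X) (hXD : X ⊆ D)
    (F : EuclideanSpace ℝ (Fin p) → ℝ)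
    (gradF : EuclideanSpace ℝ (Fin p) → EuclideanSpace ℝ (Fin p))
    (hessF : EuclideanSpace ℝ (Fin p) →
      (EuclideanSpace ℝ (Fin p) →L[ℝ] EuclideanSpace ℝ (Fin p)))
    (hgrad : ∀ u ∈ D, HasGradientAt F (gradF u) u)
    (hhess : ∀ u ∈ D, HasFDerivAt gradF (hessF u) u)
    (hhessCont : ContinuousOn hessF D)
    (xstar x xplus : EuclideanSpace ℝ (Fin p))
    (g : EuclideanSpace ℝ (Fin p))
    (hxstarX : xstar ∈ X) (hxX : x ∈ X) (hxplusX : xplus ∈ X)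
    (hmin : ∀ z ∈ X, F xstar ≤ F z)
    (L μ : ℝ) (hL : 0 ≤ L) (hμ : 0 < μ)
    (hlip : ∀ u ∈ segment ℝ xstar x, ∀ v ∈ segment ℝ xstar x,
      ‖hessF u - hessF v‖ ≤ L * ‖u - v‖)
    (H : EuclideanSpace ℝ (Fin p) →L[ℝ] EuclideanSpace ℝ (Fin p))
    (hHsym : ∀ u v, ⟪H u, v⟫ = ⟪u, H v⟫)
    (hHmin : ∀ v, μ * ‖v‖ ^ 2 ≤ ⟪v, H v⟫)
    (hVIstar : ∀ z ∈ X, 0 ≤ ⟪gradF xstar, z - xstar⟫)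
    (hVI : ∀ z ∈ X, 0 ≤ ⟪g + H (xplus - x), z - xplus⟫) :
    ‖xplus - xstar‖ ≤ ‖gradF x - g‖ / μ +
      (‖H - hessF x‖ / μ) * ‖x - xstar‖ + (L / (2 * μ)) * ‖x - xstar‖ ^ 2 := by
  set e := xplus - xstar with he
  have hsegD : segment ℝ x xstar ⊆ D := by
    rw [segment_symm]
    exact fun u hu => hXD (hXconv.segment_subset hxstarX hxX hu)
  -- Taylor remainder bound
  have hT : ‖gradF xstar - gradF x - hessF x (xstar - x)‖ ≤ L / 2 * ‖xstar - x‖ ^ 2 := by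
    apply taylor_remainder_half gradF hessF x xstar
      (fun u hu => hhess u (hsegD hu)) (hhessCont.mono hsegD) L hL
    intro u hu
    rw [segment_symm] at hu
    exact hlip u hu x (right_mem_segment ℝ xstar x)
  set R := gradF xstar - gradF x - hessF x (xstar - x) with hR
  set w := (gradF x - g) + ((H - hessF x) (x - xstar)) + R with hw
  have hwe : w = gradF xstar - g + H (x - xstar) := by
    have h1 : (H - hessF x) (x - xstar) = H (x - xstar) - hessF x (x - xstar) := by
      simp
    have h2 : hessF x (x - xstar) = - hessF x (xstar - x) := by
      rw [← map_neg]; congr 1; abel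
    rw [hw, hR, h1, h2]; abel
  -- main inner product chain
  have hHe : H e = H (xplus - x) + H (x - xstar) := by
    rw [← map_add]; congr 1; rw [he]; abel
  have h3 : ⟪g + H (xplus - x), e⟫ ≤ 0 := by
    have := hVI xstar hxstarX
    have hx' : xstar - xplus = -e := by rw [he]; abel
    rw [hx', inner_neg_right] at this
    linarith
  have h4 : 0 ≤ ⟪gradF xstar, e⟫ := hVIstar xplus hxplusX
  have key : μ * ‖e‖ ^ 2 ≤ ⟪w, e⟫ := by
    have h0 : μ * ‖e‖ ^ 2 ≤ ⟪H e, e⟫ := by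
      rw [← real_inner_comm]; exact hHmin e
    have h5 : ⟪H e, e⟫ = ⟪g + H (xplus - x), e⟫ - ⟪g, e⟫ + ⟪H (x - xstar), e⟫ := by
      rw [hHe, inner_add_left, inner_add_left]; ring
    have h6 : ⟪w, e⟫ = ⟪gradF xstar, e⟫ - ⟪g, e⟫ + ⟪H (x - xstar), e⟫ := by
      rw [hwe, inner_add_left, inner_sub_left]
    linarith
  have hwnorm : ‖w‖ ≤ ‖gradF x - g‖ + ‖H - hessF x‖ * ‖x - xstar‖ + L / 2 * ‖x - xstar‖ ^ 2 := by
    have hb : ‖(H - hessF x) (x - xstar)‖ ≤ ‖H - hessF x‖ * ‖x - xstar‖ :=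
      (H - hessF x).le_opNorm _
    have hc : ‖R‖ ≤ L / 2 * ‖x - xstar‖ ^ 2 := by
      rw [show ‖x - xstar‖ = ‖xstar - x‖ from (norm_sub_rev _ _)]
      exact hT
    calc ‖w‖ ≤ ‖(gradF x - g) + ((H - hessF x) (x - xstar))‖ + ‖R‖ := norm_add_le _ _
      _ ≤ ‖gradF x - g‖ + ‖(H - hessF x) (x - xstar)‖ + ‖R‖ := by
          linarith [norm_add_le (gradF x - g) ((H - hessF x) (x - xstar))]
      _ ≤ _ := by linarith
  set S := ‖gradF x - g‖ + ‖H - hessF x‖ * ‖x - xstar‖ + L / 2 * ‖x - xstar‖ ^ 2 with hS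
  have hS0 : 0 ≤ S := by
    have := norm_nonneg (gradF x - g)
    have := norm_nonneg (H - hessF x)
    have := norm_nonneg (x - xstar)
    have h2 : (0:ℝ) ≤ ‖x - xstar‖ ^ 2 := sq_nonneg _
    rw [hS]
    have h3 : (0:ℝ) ≤ ‖H - hessF x‖ * ‖x - xstar‖ :=
      mul_nonneg (norm_nonneg _) (norm_nonneg _)
    nlinarith
  have hkey2 : μ * ‖e‖ ^ 2 ≤ S * ‖e‖ := by
    calc μ * ‖e‖ ^ 2 ≤ ⟪w, e⟫ := key
      _ ≤ ‖w‖ * ‖e‖ := real_inner_le_norm w e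
      _ ≤ S * ‖e‖ := mul_le_mul_of_nonneg_right hwnorm (norm_nonneg e)
  have hRHS : ‖gradF x - g‖ / μ + (‖H - hessF x‖ / μ) * ‖x - xstar‖ +
      (L / (2 * μ)) * ‖x - xstar‖ ^ 2 = S / μ := by
    rw [hS]; ring
  rw [hRHS]
  rcases eq_or_lt_of_le (norm_nonneg e) with h | h
  · rw [← h]
    have : (0:ℝ) ≤ S / μ := div_nonneg hS0 (le_of_lt hμ)
    linarith
  · have : μ * ‖e‖ ≤ S := by
      have := hkey2
      rw [pow_two] at this
      nlinarith
    rw [le_div_iff₀ hμ]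
    linarith
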